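/- Let S1, S2 be finite-alphabet random variables and suppose for some n ≥ 1 that X1 is a (randomized) function of S1^n = (S1,…,S1ₙ) and X2 is a function of S2^n, where (S1ₖ, S2ₖ) are i.i.d. copies of (S1, S2), i.e., the Markov chain X1 ↔ S1^n ↔ S2^n ↔ X2 holds. Then the maximal correlation satisfies ρ*_{X1 X2} ≤ ρ*_{S1 S2}. -/

import Mathlib

open scoped BigOperators

set_option synthInstance.maxSize 8192

noncomputable section

/-- Probability that the random variable `X` equals `x`, under pmf `p` on finite `Ω`. -/
def prEq {Ω α : Type*} [Fintype Ω] [DecidableEq α] (p : Ω → ℝ) (X : Ω → α) (x : α) : ℝ :=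
  ∑ ω : Ω, if X ω = x then p ω else 0

/-- Shannon entropy (base 2) of a discrete random variable. -/
def entH {Ω α : Type*} [Fintype Ω] [Fintype α] [DecidableEq α] (p : Ω → ℝ) (X : Ω → α) : ℝ :=
  -∑ x : α, prEq p X x * Real.logb 2 (prEq p X x)

/-- Conditional entropy `H(X | Y)`. -/
def condH {Ω α β : Type*} [Fintype Ω] [Fintype α] [DecidableEq α] [Fintype β] [DecidableEq β]
    (p : Ω → ℝ) (X : Ω → α) (Y : Ω → β) : ℝ :=
  entH p (fun ω => (X ω, Y ω)) - entH p Y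

/-- Conditional mutual information `I(X ; Y | Z)`. -/
def condMI {Ω α β γ : Type*} [Fintype Ω] [Fintype α] [DecidableEq α] [Fintype β] [DecidableEq β]
    [Fintype γ] [DecidableEq γ] (p : Ω → ℝ) (X : Ω → α) (Y : Ω → β) (Z : Ω → γ) : ℝ :=
  condH p X Z + condH p Y Z - condH p (fun ω => (X ω, Y ω)) Z

/-- (Unconditional) mutual information `I(X ; Y)`. -/
def mi2 {Ω α β : Type*} [Fintype Ω] [Fintype α] [DecidableEq α] [Fintype β] [DecidableEq β]
    (p : Ω → ℝ) (X : Ω → α) (Y : Ω → β) : ℝ :=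
  entH p X + entH p Y - entH p (fun ω => (X ω, Y ω))

/-- `p` is a probability mass function on `Ω`. -/
def IsPMF {Ω : Type*} [Fintype Ω] (p : Ω → ℝ) : Prop :=
  (∀ ω, 0 ≤ p ω) ∧ ∑ ω : Ω, p ω = 1

/-- The Markov chain `A ↔ B ↔ C`: `A` and `C` are conditionally independent given `B`. -/
def MarkovChain {Ω α β γ : Type*} [Fintype Ω] [DecidableEq α] [DecidableEq β] [DecidableEq γ]
    (p : Ω → ℝ) (A : Ω → α) (B : Ω → β) (C : Ω → γ) : Prop :=
  ∀ a b c, prEq p (fun ω => (A ω, B ω, C ω)) (a, b, c) * prEq p B b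
    = prEq p (fun ω => (A ω, B ω)) (a, b) * prEq p (fun ω => (B ω, C ω)) (b, c)

/-- Hirschfeld–Gebelein–Rényi maximal correlation of `X` and `Y`
(with the convention `sSup ∅ = 0` in `ℝ`). -/
def maxCorr {Ω α β : Type*} [Fintype Ω] (p : Ω → ℝ) (X : Ω → α) (Y : Ω → β) : ℝ :=
  sSup {r : ℝ | ∃ f : α → ℝ, ∃ g : β → ℝ,
    (∑ ω : Ω, p ω * f (X ω)) = 0 ∧ (∑ ω : Ω, p ω * g (Y ω)) = 0 ∧
    (∑ ω : Ω, p ω * (f (X ω)) ^ 2) = 1 ∧ (∑ ω : Ω, p ω * (g (Y ω)) ^ 2) = 1 ∧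
    r = ∑ ω : Ω, p ω * f (X ω) * g (Y ω)}


namespace KUaux
open Finset

/-- Weighted Cauchy–Schwarz. -/
lemma wcs {Ω : Type*} [Fintype Ω] (w f g : Ω → ℝ) (hw : ∀ ω, 0 ≤ w ω) :
    ∑ ω : Ω, w ω * f ω * g ω ≤
      Real.sqrt (∑ ω : Ω, w ω * f ω ^ 2) * Real.sqrt (∑ ω : Ω, w ω * g ω ^ 2) := by
  have e1 : ∑ ω : Ω, w ω * f ω * g ω
      = ∑ ω : Ω, (Real.sqrt (w ω) * f ω) * (Real.sqrt (w ω) * g ω) := by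
    refine Finset.sum_congr rfl fun ω _ => ?_
    rw [mul_mul_mul_comm, Real.mul_self_sqrt (hw ω)]; ring
  have e2 : ∑ ω : Ω, w ω * f ω ^ 2 = ∑ ω : Ω, (Real.sqrt (w ω) * f ω) ^ 2 := by
    refine Finset.sum_congr rfl fun ω _ => ?_
    rw [mul_pow, Real.sq_sqrt (hw ω)]
  have e3 : ∑ ω : Ω, w ω * g ω ^ 2 = ∑ ω : Ω, (Real.sqrt (w ω) * g ω) ^ 2 := by
    refine Finset.sum_congr rfl fun ω _ => ?_
    rw [mul_pow, Real.sq_sqrt (hw ω)]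
  rw [e1, e2, e3]
  have key := Finset.sum_mul_sq_le_sq_mul_sq Finset.univ
    (fun ω => Real.sqrt (w ω) * f ω) (fun ω => Real.sqrt (w ω) * g ω)
  have hA : (0:ℝ) ≤ ∑ ω : Ω, (Real.sqrt (w ω) * f ω) ^ 2 :=
    Finset.sum_nonneg fun ω _ => sq_nonneg _
  calc ∑ ω : Ω, (Real.sqrt (w ω) * f ω) * (Real.sqrt (w ω) * g ω)
      ≤ |∑ ω : Ω, (Real.sqrt (w ω) * f ω) * (Real.sqrt (w ω) * g ω)| := le_abs_self _
    _ = Real.sqrt ((∑ ω : Ω, (Real.sqrt (w ω) * f ω) * (Real.sqrt (w ω) * g ω)) ^ 2) :=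
        (Real.sqrt_sq_eq_abs _).symm
    _ ≤ Real.sqrt ((∑ ω : Ω, (Real.sqrt (w ω) * f ω) ^ 2) *
          (∑ ω : Ω, (Real.sqrt (w ω) * g ω) ^ 2)) := Real.sqrt_le_sqrt key
    _ = _ := Real.sqrt_mul hA _

/-- Jensen / Cauchy–Schwarz: the square of a mean is at most the mean of squares. -/
lemma sq_sum_le {Ω : Type*} [Fintype Ω] (m h : Ω → ℝ) (hm : ∀ ω, 0 ≤ m ω)
    (hm1 : ∑ ω : Ω, m ω = 1) :
    (∑ ω : Ω, m ω * h ω) ^ 2 ≤ ∑ ω : Ω, m ω * h ω ^ 2 := by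
  have key := Finset.sum_mul_sq_le_sq_mul_sq Finset.univ
    (fun ω => Real.sqrt (m ω)) (fun ω => Real.sqrt (m ω) * h ω)
  have e1 : ∑ ω : Ω, Real.sqrt (m ω) * (Real.sqrt (m ω) * h ω) = ∑ ω : Ω, m ω * h ω := by
    refine Finset.sum_congr rfl fun ω _ => ?_
    rw [← mul_assoc, Real.mul_self_sqrt (hm ω)]
  have e2 : ∑ ω : Ω, Real.sqrt (m ω) ^ 2 = (1:ℝ) := by
    rw [← hm1]; exact Finset.sum_congr rfl fun ω _ => Real.sq_sqrt (hm ω)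
  have e3 : ∑ ω : Ω, (Real.sqrt (m ω) * h ω) ^ 2 = ∑ ω : Ω, m ω * h ω ^ 2 := by
    refine Finset.sum_congr rfl fun ω _ => ?_
    rw [mul_pow, Real.sq_sqrt (hm ω)]
  rw [e1, e2, e3, one_mul] at key
  exact key

/-- Two-vector Cauchy–Schwarz with square roots. -/
lemma sqrt_cs2 {a1 a2 b1 b2 : ℝ} (ha1 : 0 ≤ a1) (ha2 : 0 ≤ a2) (hb1 : 0 ≤ b1) (hb2 : 0 ≤ b2) :
    Real.sqrt a1 * Real.sqrt b1 + Real.sqrt a2 * Real.sqrt b2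
      ≤ Real.sqrt (a1 + a2) * Real.sqrt (b1 + b2) := by
  rw [← Real.sqrt_mul (add_nonneg ha1 ha2)]
  rw [show (Real.sqrt a1 * Real.sqrt b1 + Real.sqrt a2 * Real.sqrt b2)
      = Real.sqrt ((Real.sqrt a1 * Real.sqrt b1 + Real.sqrt a2 * Real.sqrt b2) ^ 2) from
    (Real.sqrt_sq (by positivity)).symm]
  apply Real.sqrt_le_sqrt
  have s1 := Real.sq_sqrt ha1
  have s2 := Real.sq_sqrt ha2
  have s3 := Real.sq_sqrt hb1
  have s4 := Real.sq_sqrt hb2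
  nlinarith [sq_nonneg (Real.sqrt a1 * Real.sqrt b2 - Real.sqrt a2 * Real.sqrt b1),
    Real.sqrt_nonneg a1, Real.sqrt_nonneg a2, Real.sqrt_nonneg b1, Real.sqrt_nonneg b2]

/-- Every element of the maximal-correlation set is at most 1. -/
lemma maxCorr_set_le_one {Ω α β : Type*} [Fintype Ω] (p : Ω → ℝ) (hp : ∀ ω, 0 ≤ p ω)
    (X : Ω → α) (Y : Ω → β) :
    ∀ r ∈ {r : ℝ | ∃ f : α → ℝ, ∃ g : β → ℝ,
      (∑ ω : Ω, p ω * f (X ω)) = 0 ∧ (∑ ω : Ω, p ω * g (Y ω)) = 0 ∧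
      (∑ ω : Ω, p ω * (f (X ω)) ^ 2) = 1 ∧ (∑ ω : Ω, p ω * (g (Y ω)) ^ 2) = 1 ∧
      r = ∑ ω : Ω, p ω * f (X ω) * g (Y ω)}, r ≤ 1 := by
  rintro r ⟨f, g, _, _, h3, h4, h5⟩
  rw [h5]
  calc ∑ ω : Ω, p ω * f (X ω) * g (Y ω)
      ≤ Real.sqrt (∑ ω : Ω, p ω * f (X ω) ^ 2) * Real.sqrt (∑ ω : Ω, p ω * g (Y ω) ^ 2) :=
        wcs p (fun ω => f (X ω)) (fun ω => g (Y ω)) hp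
    _ = 1 := by rw [h3, h4, Real.sqrt_one, mul_one]

lemma maxCorr_bddAbove {Ω α β : Type*} [Fintype Ω] (p : Ω → ℝ) (hp : ∀ ω, 0 ≤ p ω)
    (X : Ω → α) (Y : Ω → β) :
    BddAbove {r : ℝ | ∃ f : α → ℝ, ∃ g : β → ℝ,
      (∑ ω : Ω, p ω * f (X ω)) = 0 ∧ (∑ ω : Ω, p ω * g (Y ω)) = 0 ∧
      (∑ ω : Ω, p ω * (f (X ω)) ^ 2) = 1 ∧ (∑ ω : Ω, p ω * (g (Y ω)) ^ 2) = 1 ∧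
      r = ∑ ω : Ω, p ω * f (X ω) * g (Y ω)} :=
  ⟨1, fun r hr => maxCorr_set_le_one p hp X Y r hr⟩

lemma maxCorr_nonneg {Ω α β : Type*} [Fintype Ω] (p : Ω → ℝ) (hp : ∀ ω, 0 ≤ p ω)
    (X : Ω → α) (Y : Ω → β) : 0 ≤ maxCorr p X Y := by
  rw [maxCorr]
  rcases Set.eq_empty_or_nonempty {r : ℝ | ∃ f : α → ℝ, ∃ g : β → ℝ,
      (∑ ω : Ω, p ω * f (X ω)) = 0 ∧ (∑ ω : Ω, p ω * g (Y ω)) = 0 ∧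
      (∑ ω : Ω, p ω * (f (X ω)) ^ 2) = 1 ∧ (∑ ω : Ω, p ω * (g (Y ω)) ^ 2) = 1 ∧
      r = ∑ ω : Ω, p ω * f (X ω) * g (Y ω)} with hS | hS
  · rw [hS, Real.sSup_empty]
  · obtain ⟨r, f, g, h1, h2, h3, h4, h5⟩ := hS
    have hb := maxCorr_bddAbove p hp X Y
    have hr : r ≤ sSup _ := le_csSup hb ⟨f, g, h1, h2, h3, h4, h5⟩
    have hmem : ∃ f' : α → ℝ, ∃ g' : β → ℝ,
        (∑ ω : Ω, p ω * f' (X ω)) = 0 ∧ (∑ ω : Ω, p ω * g' (Y ω)) = 0 ∧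
        (∑ ω : Ω, p ω * (f' (X ω)) ^ 2) = 1 ∧ (∑ ω : Ω, p ω * (g' (Y ω)) ^ 2) = 1 ∧
        (-r) = ∑ ω : Ω, p ω * f' (X ω) * g' (Y ω) := by
      refine ⟨f, fun b => -g b, h1, ?_, h3, ?_, ?_⟩
      · simpa [mul_neg] using h2
      · simpa using h4
      · rw [h5]
        simp [mul_neg, Finset.sum_neg_distrib]
    have hr' : -r ≤ sSup _ := le_csSup hb hmem
    linarith

end KUaux

namespace KUaux
open Finset

/-- Covariance bound predicate: `Cov(F,G) ≤ ρ · sd(F) · sd(G)` for measure `m` on a product. -/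
def CovBound {γ δ : Type*} [Fintype γ] [Fintype δ] (m : γ × δ → ℝ) (ρ : ℝ) : Prop :=
  ∀ (F : γ → ℝ) (G : δ → ℝ),
    ∑ z : γ × δ, m z * F z.1 * G z.2 ≤
      (∑ z : γ × δ, m z * F z.1) * (∑ z : γ × δ, m z * G z.2)
        + ρ * Real.sqrt ((∑ z : γ × δ, m z * F z.1 ^ 2) - (∑ z : γ × δ, m z * F z.1) ^ 2)
            * Real.sqrt ((∑ z : γ × δ, m z * G z.2 ^ 2) - (∑ z : γ × δ, m z * G z.2) ^ 2)

lemma base_centered {α β : Type*} [Fintype α] [Fintype β] (q : α × β → ℝ) (hq : IsPMF q)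
    (F : α → ℝ) (G : β → ℝ) (hF : ∑ z : α × β, q z * F z.1 = 0)
    (hG : ∑ z : α × β, q z * G z.2 = 0) :
    ∑ z : α × β, q z * F z.1 * G z.2 ≤
      maxCorr q Prod.fst Prod.snd * Real.sqrt (∑ z : α × β, q z * F z.1 ^ 2)
        * Real.sqrt (∑ z : α × β, q z * G z.2 ^ 2) := by
  set VF := ∑ z : α × β, q z * F z.1 ^ 2 with hVFd
  set VG := ∑ z : α × β, q z * G z.2 ^ 2 with hVGd
  have hVF0 : 0 ≤ VF := Finset.sum_nonneg fun z _ => mul_nonneg (hq.1 z) (sq_nonneg _)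
  have hVG0 : 0 ≤ VG := Finset.sum_nonneg fun z _ => mul_nonneg (hq.1 z) (sq_nonneg _)
  have hρ0 : 0 ≤ maxCorr q Prod.fst Prod.snd := maxCorr_nonneg q hq.1 _ _
  rcases eq_or_lt_of_le hVF0 with h0 | hVFpos
  · -- degenerate F
    have hz : ∀ z : α × β, q z * F z.1 * G z.2 = 0 := by
      intro z
      have hterm : q z * F z.1 ^ 2 = 0 := by
        have := (Finset.sum_eq_zero_iff_of_nonneg
          (fun z _ => mul_nonneg (hq.1 z) (sq_nonneg (F z.1)))).1 h0.symm z (Finset.mem_univ z)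
        exact this
      rcases mul_eq_zero.1 hterm with h | h
      · rw [h]; ring
      · have : F z.1 = 0 := by
          have := sq_eq_zero_iff.1 h
          exact this
        rw [this]; ring
    rw [Finset.sum_eq_zero fun z _ => hz z, ← h0, Real.sqrt_zero]
    simp
  rcases eq_or_lt_of_le hVG0 with h0 | hVGpos
  · have hz : ∀ z : α × β, q z * F z.1 * G z.2 = 0 := by
      intro z
      have hterm : q z * G z.2 ^ 2 = 0 := by
        exact (Finset.sum_eq_zero_iff_of_nonneg
          (fun z _ => mul_nonneg (hq.1 z) (sq_nonneg (G z.2)))).1 h0.symm z (Finset.mem_univ z)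
      rcases mul_eq_zero.1 hterm with h | h
      · rw [h]; ring
      · rw [sq_eq_zero_iff.1 h]; ring
    rw [Finset.sum_eq_zero fun z _ => hz z, ← h0, Real.sqrt_zero]
    simp
  · -- nondegenerate
    set sF := Real.sqrt VF with hsFd
    set sG := Real.sqrt VG with hsGd
    have hsF : 0 < sF := Real.sqrt_pos.2 hVFpos
    have hsG : 0 < sG := Real.sqrt_pos.2 hVGpos
    have hsF2 : sF ^ 2 = VF := Real.sq_sqrt hVF0
    have hsG2 : sG ^ 2 = VG := Real.sq_sqrt hVG0
    have h1 : ∑ z : α × β, q z * ((fun a => F a / sF) (Prod.fst z)) = 0 := by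
      calc ∑ z : α × β, q z * (F z.1 / sF) = (∑ z : α × β, q z * F z.1) * (1 / sF) := by
            rw [Finset.sum_mul]; exact Finset.sum_congr rfl fun z _ => by ring
        _ = 0 := by rw [hF]; ring
    have h2 : ∑ z : α × β, q z * ((fun b => G b / sG) (Prod.snd z)) = 0 := by
      calc ∑ z : α × β, q z * (G z.2 / sG) = (∑ z : α × β, q z * G z.2) * (1 / sG) := by
            rw [Finset.sum_mul]; exact Finset.sum_congr rfl fun z _ => by ring
        _ = 0 := by rw [hG]; ring
    have h3 : ∑ z : α × β, q z * ((fun a => F a / sF) (Prod.fst z)) ^ 2 = 1 := by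
      calc ∑ z : α × β, q z * (F z.1 / sF) ^ 2
          = (∑ z : α × β, q z * F z.1 ^ 2) * (1 / sF ^ 2) := by
            rw [Finset.sum_mul]; exact Finset.sum_congr rfl fun z _ => by
              field_simp
        _ = 1 := by rw [← hVFd, hsF2]; field_simp
    have h4 : ∑ z : α × β, q z * ((fun b => G b / sG) (Prod.snd z)) ^ 2 = 1 := by
      calc ∑ z : α × β, q z * (G z.2 / sG) ^ 2
          = (∑ z : α × β, q z * G z.2 ^ 2) * (1 / sG ^ 2) := by
            rw [Finset.sum_mul]; exact Finset.sum_congr rfl fun z _ => by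
              field_simp
        _ = 1 := by rw [← hVGd, hsG2]; field_simp
    have hmem : (∑ z : α × β, q z * ((fun a => F a / sF) (Prod.fst z))
        * ((fun b => G b / sG) (Prod.snd z))) ≤ maxCorr q Prod.fst Prod.snd := by
      rw [maxCorr]
      exact le_csSup (maxCorr_bddAbove q hq.1 _ _)
        ⟨fun a => F a / sF, fun b => G b / sG, h1, h2, h3, h4, rfl⟩
    have hrw : ∑ z : α × β, q z * F z.1 * G z.2
        = sF * sG * ∑ z : α × β, q z * (F z.1 / sF) * (G z.2 / sG) := by
      rw [Finset.mul_sum]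
      refine Finset.sum_congr rfl fun z _ => ?_
      field_simp
    rw [hrw]
    have := mul_le_mul_of_nonneg_left hmem (le_of_lt (mul_pos hsF hsG))
    calc sF * sG * ∑ z : α × β, q z * (F z.1 / sF) * (G z.2 / sG)
        ≤ sF * sG * maxCorr q Prod.fst Prod.snd := this
      _ = maxCorr q Prod.fst Prod.snd * sF * sG := by ring

lemma base {α β : Type*} [Fintype α] [Fintype β] (q : α × β → ℝ) (hq : IsPMF q) :
    CovBound q (maxCorr q Prod.fst Prod.snd) := by
  intro F G
  set μF := ∑ z : α × β, q z * F z.1 with hμFd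
  set μG := ∑ z : α × β, q z * G z.2 with hμGd
  have c1 : ∑ z : α × β, q z * ((fun a => F a - μF) (Prod.fst z)) = 0 := by
    have : ∀ z : α × β, q z * (F z.1 - μF) = q z * F z.1 - μF * q z := fun z => by ring
    rw [Finset.sum_congr rfl fun z _ => this z, Finset.sum_sub_distrib, ← Finset.mul_sum,
      hq.2, ← hμFd]
    ring
  have c2 : ∑ z : α × β, q z * ((fun b => G b - μG) (Prod.snd z)) = 0 := by
    have : ∀ z : α × β, q z * (G z.2 - μG) = q z * G z.2 - μG * q z := fun z => by ring
    rw [Finset.sum_congr rfl fun z _ => this z, Finset.sum_sub_distrib, ← Finset.mul_sum,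
      hq.2, ← hμGd]
    ring
  have c3 : ∑ z : α × β, q z * ((fun a => F a - μF) (Prod.fst z)) ^ 2
      = (∑ z : α × β, q z * F z.1 ^ 2) - μF ^ 2 := by
    have : ∀ z : α × β, q z * (F z.1 - μF) ^ 2
        = q z * F z.1 ^ 2 - 2 * μF * (q z * F z.1) + μF ^ 2 * q z := fun z => by ring
    rw [Finset.sum_congr rfl fun z _ => this z, Finset.sum_add_distrib,
      Finset.sum_sub_distrib, ← Finset.mul_sum, ← Finset.mul_sum, hq.2, ← hμFd]
    ring
  have c4 : ∑ z : α × β, q z * ((fun b => G b - μG) (Prod.snd z)) ^ 2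
      = (∑ z : α × β, q z * G z.2 ^ 2) - μG ^ 2 := by
    have : ∀ z : α × β, q z * (G z.2 - μG) ^ 2
        = q z * G z.2 ^ 2 - 2 * μG * (q z * G z.2) + μG ^ 2 * q z := fun z => by ring
    rw [Finset.sum_congr rfl fun z _ => this z, Finset.sum_add_distrib,
      Finset.sum_sub_distrib, ← Finset.mul_sum, ← Finset.mul_sum, hq.2, ← hμGd]
    ring
  have c5 : ∑ z : α × β, q z * ((fun a => F a - μF) (Prod.fst z))
      * ((fun b => G b - μG) (Prod.snd z))
      = (∑ z : α × β, q z * F z.1 * G z.2) - μF * μG := by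
    have : ∀ z : α × β, q z * (F z.1 - μF) * (G z.2 - μG)
        = q z * F z.1 * G z.2 - μF * (q z * G z.2) - μG * (q z * F z.1) + μF * μG * q z :=
      fun z => by ring
    rw [Finset.sum_congr rfl fun z _ => this z, Finset.sum_add_distrib,
      Finset.sum_sub_distrib, Finset.sum_sub_distrib, ← Finset.mul_sum, ← Finset.mul_sum,
      ← Finset.mul_sum, hq.2, ← hμFd, ← hμGd]
    ring
  have key := base_centered q hq (fun a => F a - μF) (fun b => G b - μG) c1 c2
  rw [c3, c4, c5] at key
  linarith

end KUaux

namespace KUaux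
open Finset

/-- One step of tensorization: a product of two measures each satisfying `CovBound _ ρ`
satisfies `CovBound _ ρ`. -/
lemma step {α β γ δ : Type*} [Fintype α] [Fintype β] [Fintype γ] [Fintype δ]
    (q : α × β → ℝ) (m : γ × δ → ℝ) (hq0 : ∀ z, 0 ≤ q z) (hq1 : ∑ z : α × β, q z = 1)
    (hm0 : ∀ z, 0 ≤ m z) (hm1 : ∑ z : γ × δ, m z = 1) {ρ : ℝ} (hρ : 0 ≤ ρ)
    (hq : CovBound q ρ) (hm : CovBound m ρ) (F : α × γ → ℝ) (G : β × δ → ℝ) :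
    ∑ w : α × β, ∑ z : γ × δ, q w * m z * F (w.1, z.1) * G (w.2, z.2)
      ≤ (∑ w : α × β, ∑ z : γ × δ, q w * m z * F (w.1, z.1))
          * (∑ w : α × β, ∑ z : γ × δ, q w * m z * G (w.2, z.2))
        + ρ * Real.sqrt ((∑ w : α × β, ∑ z : γ × δ, q w * m z * F (w.1, z.1) ^ 2)
              - (∑ w : α × β, ∑ z : γ × δ, q w * m z * F (w.1, z.1)) ^ 2)
            * Real.sqrt ((∑ w : α × β, ∑ z : γ × δ, q w * m z * G (w.2, z.2) ^ 2)
              - (∑ w : α × β, ∑ z : γ × δ, q w * m z * G (w.2, z.2)) ^ 2) := by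
  set A : α → ℝ := fun x => ∑ z : γ × δ, m z * F (x, z.1) with hAd
  set B : β → ℝ := fun y => ∑ z : γ × δ, m z * G (y, z.2) with hBd
  set QA : α → ℝ := fun x => ∑ z : γ × δ, m z * F (x, z.1) ^ 2 with hQAd
  set QB : β → ℝ := fun y => ∑ z : γ × δ, m z * G (y, z.2) ^ 2 with hQBd
  -- inner (conditional) bound from `hm`
  have inner : ∀ w : α × β,
      (∑ z : γ × δ, m z * F (w.1, z.1) * G (w.2, z.2))
        ≤ A w.1 * B w.2 + ρ * Real.sqrt (QA w.1 - A w.1 ^ 2) * Real.sqrt (QB w.2 - B w.2 ^ 2) :=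
    fun w => hm (fun c => F (w.1, c)) (fun d => G (w.2, d))
  have hVA : ∀ x, 0 ≤ QA x - A x ^ 2 := by
    intro x
    have h' : A x ^ 2 ≤ QA x := sq_sum_le m (fun z => F (x, z.1)) hm0 hm1
    linarith
  have hVB : ∀ y, 0 ≤ QB y - B y ^ 2 := by
    intro y
    have h' : B y ^ 2 ≤ QB y := sq_sum_le m (fun z => G (y, z.2)) hm0 hm1
    linarith
  -- expectation identities
  have eF : (∑ w : α × β, ∑ z : γ × δ, q w * m z * F (w.1, z.1)) = ∑ w : α × β, q w * A w.1 := by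
    refine Finset.sum_congr rfl fun w _ => ?_
    rw [hAd, Finset.mul_sum]
    exact Finset.sum_congr rfl fun z _ => (mul_assoc _ _ _)
  have eG : (∑ w : α × β, ∑ z : γ × δ, q w * m z * G (w.2, z.2)) = ∑ w : α × β, q w * B w.2 := by
    refine Finset.sum_congr rfl fun w _ => ?_
    rw [hBd, Finset.mul_sum]
    exact Finset.sum_congr rfl fun z _ => (mul_assoc _ _ _)
  have eQF : (∑ w : α × β, ∑ z : γ × δ, q w * m z * F (w.1, z.1) ^ 2)
      = ∑ w : α × β, q w * QA w.1 := by
    refine Finset.sum_congr rfl fun w _ => ?_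
    rw [hQAd, Finset.mul_sum]
    exact Finset.sum_congr rfl fun z _ => (mul_assoc _ _ _)
  have eQG : (∑ w : α × β, ∑ z : γ × δ, q w * m z * G (w.2, z.2) ^ 2)
      = ∑ w : α × β, q w * QB w.2 := by
    refine Finset.sum_congr rfl fun w _ => ?_
    rw [hQBd, Finset.mul_sum]
    exact Finset.sum_congr rfl fun z _ => (mul_assoc _ _ _)
  rw [eF, eG, eQF, eQG]
  -- chain 1: apply the inner bound
  have chain1 : (∑ w : α × β, ∑ z : γ × δ, q w * m z * F (w.1, z.1) * G (w.2, z.2))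
      ≤ ∑ w : α × β, q w * (A w.1 * B w.2
          + ρ * Real.sqrt (QA w.1 - A w.1 ^ 2) * Real.sqrt (QB w.2 - B w.2 ^ 2)) := by
    refine Finset.sum_le_sum fun w _ => ?_
    have h1 : (∑ z : γ × δ, q w * m z * F (w.1, z.1) * G (w.2, z.2))
        = q w * ∑ z : γ × δ, m z * F (w.1, z.1) * G (w.2, z.2) := by
      rw [Finset.mul_sum]; exact Finset.sum_congr rfl fun z _ => by ring
    rw [h1]
    exact mul_le_mul_of_nonneg_left (inner w) (hq0 w)
  -- split the bound into two sums
  have split : (∑ w : α × β, q w * (A w.1 * B w.2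
        + ρ * Real.sqrt (QA w.1 - A w.1 ^ 2) * Real.sqrt (QB w.2 - B w.2 ^ 2)))
      = (∑ w : α × β, q w * A w.1 * B w.2)
        + ρ * ∑ w : α × β, q w
            * (Real.sqrt (QA w.1 - A w.1 ^ 2) * Real.sqrt (QB w.2 - B w.2 ^ 2)) := by
    rw [Finset.mul_sum, ← Finset.sum_add_distrib]
    exact Finset.sum_congr rfl fun w _ => by ring
  -- term 1 via `hq`
  have t1 : (∑ w : α × β, q w * A w.1 * B w.2)
      ≤ (∑ w : α × β, q w * A w.1) * (∑ w : α × β, q w * B w.2)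
        + ρ * Real.sqrt ((∑ w : α × β, q w * A w.1 ^ 2) - (∑ w : α × β, q w * A w.1) ^ 2)
            * Real.sqrt ((∑ w : α × β, q w * B w.2 ^ 2) - (∑ w : α × β, q w * B w.2) ^ 2) :=
    hq A B
  -- term 2 via weighted Cauchy–Schwarz
  have t2 : (∑ w : α × β, q w
        * (Real.sqrt (QA w.1 - A w.1 ^ 2) * Real.sqrt (QB w.2 - B w.2 ^ 2)))
      ≤ Real.sqrt (∑ w : α × β, q w * (QA w.1 - A w.1 ^ 2))
          * Real.sqrt (∑ w : α × β, q w * (QB w.2 - B w.2 ^ 2)) := by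
    have h := wcs q (fun w : α × β => Real.sqrt (QA w.1 - A w.1 ^ 2))
      (fun w : α × β => Real.sqrt (QB w.2 - B w.2 ^ 2)) hq0
    have e1 : (∑ w : α × β, q w * Real.sqrt (QA w.1 - A w.1 ^ 2) ^ 2)
        = ∑ w : α × β, q w * (QA w.1 - A w.1 ^ 2) :=
      Finset.sum_congr rfl fun w _ => by rw [Real.sq_sqrt (hVA w.1)]
    have e2 : (∑ w : α × β, q w * Real.sqrt (QB w.2 - B w.2 ^ 2) ^ 2)
        = ∑ w : α × β, q w * (QB w.2 - B w.2 ^ 2) :=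
      Finset.sum_congr rfl fun w _ => by rw [Real.sq_sqrt (hVB w.2)]
    have e0 : (∑ w : α × β, q w
          * (Real.sqrt (QA w.1 - A w.1 ^ 2) * Real.sqrt (QB w.2 - B w.2 ^ 2)))
        = ∑ w : α × β, q w * Real.sqrt (QA w.1 - A w.1 ^ 2) * Real.sqrt (QB w.2 - B w.2 ^ 2) :=
      Finset.sum_congr rfl fun w _ => by ring
    rw [e0]
    rw [e1, e2] at h
    exact h
  -- nonnegativity facts for the two-vector CS step
  have hA1 : 0 ≤ (∑ w : α × β, q w * A w.1 ^ 2) - (∑ w : α × β, q w * A w.1) ^ 2 := by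
    have := sq_sum_le q (fun w : α × β => A w.1) hq0 hq1
    linarith
  have hB1 : 0 ≤ (∑ w : α × β, q w * B w.2 ^ 2) - (∑ w : α × β, q w * B w.2) ^ 2 := by
    have := sq_sum_le q (fun w : α × β => B w.2) hq0 hq1
    linarith
  have hA2 : 0 ≤ ∑ w : α × β, q w * (QA w.1 - A w.1 ^ 2) :=
    Finset.sum_nonneg fun w _ => mul_nonneg (hq0 w) (hVA w.1)
  have hB2 : 0 ≤ ∑ w : α × β, q w * (QB w.2 - B w.2 ^ 2) :=
    Finset.sum_nonneg fun w _ => mul_nonneg (hq0 w) (hVB w.2)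
  -- law of total variance
  have tva : ((∑ w : α × β, q w * A w.1 ^ 2) - (∑ w : α × β, q w * A w.1) ^ 2)
      + (∑ w : α × β, q w * (QA w.1 - A w.1 ^ 2))
      = (∑ w : α × β, q w * QA w.1) - (∑ w : α × β, q w * A w.1) ^ 2 := by
    have : (∑ w : α × β, q w * (QA w.1 - A w.1 ^ 2))
        = (∑ w : α × β, q w * QA w.1) - ∑ w : α × β, q w * A w.1 ^ 2 := by
      rw [← Finset.sum_sub_distrib]
      exact Finset.sum_congr rfl fun w _ => by ring
    rw [this]; ring
  have tvb : ((∑ w : α × β, q w * B w.2 ^ 2) - (∑ w : α × β, q w * B w.2) ^ 2)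
      + (∑ w : α × β, q w * (QB w.2 - B w.2 ^ 2))
      = (∑ w : α × β, q w * QB w.2) - (∑ w : α × β, q w * B w.2) ^ 2 := by
    have : (∑ w : α × β, q w * (QB w.2 - B w.2 ^ 2))
        = (∑ w : α × β, q w * QB w.2) - ∑ w : α × β, q w * B w.2 ^ 2 := by
      rw [← Finset.sum_sub_distrib]
      exact Finset.sum_congr rfl fun w _ => by ring
    rw [this]; ring
  have cs2 := sqrt_cs2 hA1 hA2 hB1 hB2
  rw [tva, tvb] at cs2
  calc ∑ w : α × β, ∑ z : γ × δ, q w * m z * F (w.1, z.1) * G (w.2, z.2)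
      ≤ ∑ w : α × β, q w * (A w.1 * B w.2
          + ρ * Real.sqrt (QA w.1 - A w.1 ^ 2) * Real.sqrt (QB w.2 - B w.2 ^ 2)) := chain1
    _ = (∑ w : α × β, q w * A w.1 * B w.2)
        + ρ * ∑ w : α × β, q w
            * (Real.sqrt (QA w.1 - A w.1 ^ 2) * Real.sqrt (QB w.2 - B w.2 ^ 2)) := split
    _ ≤ ((∑ w : α × β, q w * A w.1) * (∑ w : α × β, q w * B w.2)
          + ρ * Real.sqrt ((∑ w : α × β, q w * A w.1 ^ 2) - (∑ w : α × β, q w * A w.1) ^ 2)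
              * Real.sqrt ((∑ w : α × β, q w * B w.2 ^ 2) - (∑ w : α × β, q w * B w.2) ^ 2))
        + ρ * (Real.sqrt (∑ w : α × β, q w * (QA w.1 - A w.1 ^ 2))
              * Real.sqrt (∑ w : α × β, q w * (QB w.2 - B w.2 ^ 2))) := by
        have h2 := mul_le_mul_of_nonneg_left t2 hρ
        linarith
    _ ≤ (∑ w : α × β, q w * A w.1) * (∑ w : α × β, q w * B w.2)
        + ρ * Real.sqrt ((∑ w : α × β, q w * QA w.1) - (∑ w : α × β, q w * A w.1) ^ 2)
            * Real.sqrt ((∑ w : α × β, q w * QB w.2) - (∑ w : α × β, q w * B w.2) ^ 2) := by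
        have h3 := mul_le_mul_of_nonneg_left cs2 hρ
        nlinarith [h3]

end KUaux

set_option synthInstance.maxSize 8192
set_option synthInstance.maxHeartbeats 400000

namespace KUaux
open Finset

lemma sum_succ_fun {γ : Type*} [Fintype γ] {n : ℕ} (Φ : (Fin (n + 1) → γ) → ℝ) :
    ∑ u : Fin (n + 1) → γ, Φ u = ∑ x : γ, ∑ u : Fin n → γ, Φ (Fin.cons x u) := by
  rw [← Equiv.sum_comp (Fin.consEquiv (fun _ : Fin (n + 1) => γ)) Φ, Fintype.sum_prod_type]
  rfl

set_option maxHeartbeats 1000000 in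
lemma sum_pair_succ {α β : Type*} [Fintype α] [Fintype β] {n : ℕ}
    (Φ : (Fin (n + 1) → α) × (Fin (n + 1) → β) → ℝ) :
    ∑ z : (Fin (n + 1) → α) × (Fin (n + 1) → β), Φ z
      = ∑ w : α × β, ∑ z : (Fin n → α) × (Fin n → β),
          Φ (Fin.cons w.1 z.1, Fin.cons w.2 z.2) := by
  calc ∑ z : (Fin (n + 1) → α) × (Fin (n + 1) → β), Φ z
      = ∑ u : Fin (n + 1) → α, ∑ v : Fin (n + 1) → β, Φ (u, v) := Fintype.sum_prod_type _
    _ = ∑ x : α, ∑ u : Fin n → α, ∑ v : Fin (n + 1) → β, Φ (Fin.cons x u, v) :=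
        sum_succ_fun _
    _ = ∑ x : α, ∑ u : Fin n → α, ∑ y : β, ∑ v : Fin n → β,
          Φ (Fin.cons x u, Fin.cons y v) := by
        exact Finset.sum_congr rfl fun x _ => Finset.sum_congr rfl fun u _ => sum_succ_fun _
    _ = ∑ x : α, ∑ y : β, ∑ u : Fin n → α, ∑ v : Fin n → β,
          Φ (Fin.cons x u, Fin.cons y v) :=
        Finset.sum_congr rfl fun x _ => Finset.sum_comm
    _ = ∑ w : α × β, ∑ z : (Fin n → α) × (Fin n → β),
          Φ (Fin.cons w.1 z.1, Fin.cons w.2 z.2) := by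
        calc ∑ x : α, ∑ y : β, ∑ u : Fin n → α, ∑ v : Fin n → β,
              Φ (Fin.cons x u, Fin.cons y v)
            = ∑ w : α × β, ∑ u : Fin n → α, ∑ v : Fin n → β,
              Φ (Fin.cons w.1 u, Fin.cons w.2 v) :=
            (Fintype.sum_prod_type (f := fun w : α × β => ∑ u : Fin n → α, ∑ v : Fin n → β,
              Φ (Fin.cons w.1 u, Fin.cons w.2 v))).symm
          _ = ∑ w : α × β, ∑ z : (Fin n → α) × (Fin n → β),
              Φ (Fin.cons w.1 z.1, Fin.cons w.2 z.2) :=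
            Finset.sum_congr rfl fun w _ =>
              (Fintype.sum_prod_type (f := fun z : (Fin n → α) × (Fin n → β) =>
                Φ (Fin.cons w.1 z.1, Fin.cons w.2 z.2))).symm

lemma consProd {α β : Type*} (q : α × β → ℝ) {n : ℕ} (x : α) (y : β)
    (u : Fin n → α) (v : Fin n → β) :
    ∏ k : Fin (n + 1), q ((Fin.cons x u : Fin (n + 1) → α) k, (Fin.cons y v : Fin (n + 1) → β) k)
      = q (x, y) * ∏ k : Fin n, q (u k, v k) := by
  rw [Fin.prod_univ_succ]
  simp [Fin.cons_zero, Fin.cons_succ]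

set_option maxHeartbeats 1000000 in
lemma sumP {α β : Type*} [Fintype α] [Fintype β] (q : α × β → ℝ)
    (hq1 : ∑ z : α × β, q z = 1) :
    ∀ n : ℕ, ∑ z : (Fin n → α) × (Fin n → β), ∏ k : Fin n, q (z.1 k, z.2 k) = 1 := by
  intro n
  induction n with
  | zero => simp
  | succ n ih =>
    rw [sum_pair_succ (fun z : (Fin (n + 1) → α) × (Fin (n + 1) → β) =>
      ∏ k : Fin (n + 1), q (z.1 k, z.2 k))]
    have hw : ∀ w : α × β, (∑ z : (Fin n → α) × (Fin n → β),
        ∏ k : Fin (n + 1), q ((Fin.cons w.1 z.1 : Fin (n + 1) → α) k,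
          (Fin.cons w.2 z.2 : Fin (n + 1) → β) k)) = q w := by
      intro w
      calc (∑ z : (Fin n → α) × (Fin n → β),
            ∏ k : Fin (n + 1), q ((Fin.cons w.1 z.1 : Fin (n + 1) → α) k,
              (Fin.cons w.2 z.2 : Fin (n + 1) → β) k))
          = ∑ z : (Fin n → α) × (Fin n → β), q (w.1, w.2) * ∏ k : Fin n, q (z.1 k, z.2 k) :=
            Finset.sum_congr rfl fun z _ => consProd q w.1 w.2 z.1 z.2
        _ = q w := by rw [← Finset.mul_sum, ih, mul_one, Prod.mk.eta]
    rw [Finset.sum_congr rfl fun w _ => hw w, hq1]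

set_option maxHeartbeats 1000000 in
lemma tensor {α β : Type*} [Fintype α] [Fintype β] (q : α × β → ℝ) (hq : IsPMF q)
    {ρ : ℝ} (hρ : 0 ≤ ρ) (hbase : CovBound q ρ) :
    ∀ n : ℕ, CovBound (fun z : (Fin n → α) × (Fin n → β) => ∏ k : Fin n, q (z.1 k, z.2 k)) ρ := by
  intro n
  induction n with
  | zero =>
    intro F G
    have hs : ∀ h : (Fin 0 → α) × (Fin 0 → β) → ℝ,
        (∑ z : (Fin 0 → α) × (Fin 0 → β), h z) = h (default, default) := by
      intro h
      rw [Fintype.sum_prod_type, Fintype.sum_unique, Fintype.sum_unique]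
    beta_reduce
    simp only [hs]
    simp [sub_self]
  | succ n ih =>
    intro F G
    beta_reduce
    have key : ∀ (Φ : (Fin (n + 1) → α) → ℝ) (Ψ : (Fin (n + 1) → β) → ℝ),
        (∑ z : (Fin (n + 1) → α) × (Fin (n + 1) → β),
            (∏ k : Fin (n + 1), q (z.1 k, z.2 k)) * Φ z.1 * Ψ z.2)
          = ∑ w : α × β, ∑ z : (Fin n → α) × (Fin n → β),
              q w * (∏ k : Fin n, q (z.1 k, z.2 k))
                * Φ (Fin.cons w.1 z.1) * Ψ (Fin.cons w.2 z.2) := by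
      intro Φ Ψ
      rw [sum_pair_succ (fun z : (Fin (n + 1) → α) × (Fin (n + 1) → β) =>
        (∏ k : Fin (n + 1), q (z.1 k, z.2 k)) * Φ z.1 * Ψ z.2)]
      refine Finset.sum_congr rfl fun w _ => Finset.sum_congr rfl fun z _ => ?_
      show (∏ k : Fin (n + 1), q ((Fin.cons w.1 z.1 : Fin (n + 1) → α) k,
          (Fin.cons w.2 z.2 : Fin (n + 1) → β) k)) * Φ (Fin.cons w.1 z.1) * Ψ (Fin.cons w.2 z.2)
        = _
      rw [consProd q w.1 w.2 z.1 z.2, Prod.mk.eta]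
    have key2F : ∀ (Φ : (Fin (n + 1) → α) → ℝ),
        (∑ z : (Fin (n + 1) → α) × (Fin (n + 1) → β),
            (∏ k : Fin (n + 1), q (z.1 k, z.2 k)) * Φ z.1)
          = ∑ w : α × β, ∑ z : (Fin n → α) × (Fin n → β),
              q w * (∏ k : Fin n, q (z.1 k, z.2 k)) * Φ (Fin.cons w.1 z.1) := by
      intro Φ
      rw [sum_pair_succ (fun z : (Fin (n + 1) → α) × (Fin (n + 1) → β) =>
        (∏ k : Fin (n + 1), q (z.1 k, z.2 k)) * Φ z.1)]
      refine Finset.sum_congr rfl fun w _ => Finset.sum_congr rfl fun z _ => ?_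
      show (∏ k : Fin (n + 1), q ((Fin.cons w.1 z.1 : Fin (n + 1) → α) k,
          (Fin.cons w.2 z.2 : Fin (n + 1) → β) k)) * Φ (Fin.cons w.1 z.1) = _
      rw [consProd q w.1 w.2 z.1 z.2, Prod.mk.eta]
    have key2G : ∀ (Ψ : (Fin (n + 1) → β) → ℝ),
        (∑ z : (Fin (n + 1) → α) × (Fin (n + 1) → β),
            (∏ k : Fin (n + 1), q (z.1 k, z.2 k)) * Ψ z.2)
          = ∑ w : α × β, ∑ z : (Fin n → α) × (Fin n → β),
              q w * (∏ k : Fin n, q (z.1 k, z.2 k)) * Ψ (Fin.cons w.2 z.2) := by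
      intro Ψ
      rw [sum_pair_succ (fun z : (Fin (n + 1) → α) × (Fin (n + 1) → β) =>
        (∏ k : Fin (n + 1), q (z.1 k, z.2 k)) * Ψ z.2)]
      refine Finset.sum_congr rfl fun w _ => Finset.sum_congr rfl fun z _ => ?_
      show (∏ k : Fin (n + 1), q ((Fin.cons w.1 z.1 : Fin (n + 1) → α) k,
          (Fin.cons w.2 z.2 : Fin (n + 1) → β) k)) * Ψ (Fin.cons w.2 z.2) = _
      rw [consProd q w.1 w.2 z.1 z.2, Prod.mk.eta]
    have hstep := step q (fun z : (Fin n → α) × (Fin n → β) => ∏ k : Fin n, q (z.1 k, z.2 k))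
      hq.1 hq.2 (fun z => Finset.prod_nonneg fun k _ => hq.1 _) (sumP q hq.2 n) hρ hbase ih
      (fun p : α × (Fin n → α) => F (Fin.cons p.1 p.2))
      (fun p : β × (Fin n → β) => G (Fin.cons p.1 p.2))
    rw [key F G, key2F F, key2G G, key2F (fun u => F u ^ 2), key2G (fun v => G v ^ 2)]
    exact hstep

end KUaux


set_option maxHeartbeats 1000000 in
/-- Kang–Ulukus / Witsenhausen: if `X1` is a randomized function of `S1^n` and `X2` a
randomized function of `S2^n`, where `(S1ₖ, S2ₖ)` are i.i.d. with joint pmf `q`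
(Markov chain `X1 ↔ S1^n ↔ S2^n ↔ X2`), then `ρ*_{X1 X2} ≤ ρ*_{S1 S2}`. -/
theorem stmt12 {α β X1t X2t : Type*} [Fintype α] [Fintype β]
    [Fintype X1t] [Fintype X2t] {n : ℕ}
    (q : α × β → ℝ) (hq : IsPMF q)
    (K1 : (Fin n → α) → X1t → ℝ)
    (hK1 : ∀ s, (∀ x, 0 ≤ K1 s x) ∧ ∑ x : X1t, K1 s x = 1)
    (K2 : (Fin n → β) → X2t → ℝ)
    (hK2 : ∀ s, (∀ x, 0 ≤ K2 s x) ∧ ∑ x : X2t, K2 s x = 1) :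
    maxCorr
        (fun ω : (Fin n → α × β) × X1t × X2t =>
          (∏ k : Fin n, q (ω.1 k)) * K1 (fun k => (ω.1 k).1) ω.2.1
            * K2 (fun k => (ω.1 k).2) ω.2.2)
        (fun ω => ω.2.1) (fun ω => ω.2.2)
      ≤ maxCorr q Prod.fst Prod.snd := by
  classical
  have hρ0 : 0 ≤ maxCorr q Prod.fst Prod.snd := KUaux.maxCorr_nonneg q hq.1 _ _
  refine Real.sSup_le ?_ hρ0
  rintro r ⟨f, g, h1, h2, h3, h4, h5⟩
  beta_reduce at h1 h2 h3 h4 h5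
  have hK1' : ∀ s, ∑ x : X1t, K1 s x = 1 := fun s => (hK1 s).2
  have hK2' : ∀ s, ∑ x : X2t, K2 s x = 1 := fun s => (hK2 s).2
  -- step 1: integrate out X1, X2
  have key : ∀ (φ : X1t → ℝ) (ψ : X2t → ℝ),
      (∑ ω : (Fin n → α × β) × X1t × X2t,
          (∏ k : Fin n, q (ω.1 k)) * K1 (fun k => (ω.1 k).1) ω.2.1
            * K2 (fun k => (ω.1 k).2) ω.2.2 * φ ω.2.1 * ψ ω.2.2)
        = ∑ s : Fin n → α × β, (∏ k : Fin n, q (s k))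
            * (∑ x : X1t, K1 (fun k => (s k).1) x * φ x)
            * (∑ x : X2t, K2 (fun k => (s k).2) x * ψ x) := by
    intro φ ψ
    rw [Fintype.sum_prod_type]
    refine Finset.sum_congr rfl fun s _ => ?_
    rw [Fintype.sum_prod_type]
    simp only [Finset.mul_sum, Finset.sum_mul]
    rw [Finset.sum_comm]
    refine Finset.sum_congr rfl fun x2 _ => ?_
    refine Finset.sum_congr rfl fun x1 _ => ?_
    ring
  have eR : r = ∑ s : Fin n → α × β, (∏ k : Fin n, q (s k))
      * (∑ x : X1t, K1 (fun k => (s k).1) x * f x)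
      * (∑ x : X2t, K2 (fun k => (s k).2) x * g x) := by
    rw [h5]; exact key f g
  have e0F : (∑ s : Fin n → α × β, (∏ k : Fin n, q (s k))
      * (∑ x : X1t, K1 (fun k => (s k).1) x * f x)) = 0 := by
    have k1 := key f (fun _ => (1:ℝ))
    simp only [mul_one, hK2'] at k1
    rw [← k1]; exact h1
  have e0G : (∑ s : Fin n → α × β, (∏ k : Fin n, q (s k))
      * (∑ x : X2t, K2 (fun k => (s k).2) x * g x)) = 0 := by
    have k2 := key (fun _ => (1:ℝ)) g
    simp only [mul_one, hK1'] at k2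
    rw [← k2]; exact h2
  have eQFs : (∑ s : Fin n → α × β, (∏ k : Fin n, q (s k))
      * (∑ x : X1t, K1 (fun k => (s k).1) x * f x ^ 2)) = 1 := by
    have k3 := key (fun x => f x ^ 2) (fun _ => (1:ℝ))
    simp only [mul_one, hK2'] at k3
    rw [← k3]; exact h3
  have eQGs : (∑ s : Fin n → α × β, (∏ k : Fin n, q (s k))
      * (∑ x : X2t, K2 (fun k => (s k).2) x * g x ^ 2)) = 1 := by
    have k4 := key (fun _ => (1:ℝ)) (fun x => g x ^ 2)
    simp only [mul_one, hK1'] at k4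
    rw [← k4]; exact h4
  -- Jensen
  have hVF : (∑ s : Fin n → α × β, (∏ k : Fin n, q (s k))
      * (∑ x : X1t, K1 (fun k => (s k).1) x * f x) ^ 2) ≤ 1 := by
    rw [← eQFs]
    refine Finset.sum_le_sum fun s _ => ?_
    refine mul_le_mul_of_nonneg_left ?_ (Finset.prod_nonneg fun k _ => hq.1 _)
    exact KUaux.sq_sum_le (K1 (fun k => (s k).1)) f (hK1 _).1 (hK1 _).2
  have hVG : (∑ s : Fin n → α × β, (∏ k : Fin n, q (s k))
      * (∑ x : X2t, K2 (fun k => (s k).2) x * g x) ^ 2) ≤ 1 := by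
    rw [← eQGs]
    refine Finset.sum_le_sum fun s _ => ?_
    refine mul_le_mul_of_nonneg_left ?_ (Finset.prod_nonneg fun k _ => hq.1 _)
    exact KUaux.sq_sum_le (K2 (fun k => (s k).2)) g (hK2 _).1 (hK2 _).2
  -- step 2: transfer to the pair representation
  have trans : ∀ (Φ : (Fin n → α) → ℝ) (Ψ : (Fin n → β) → ℝ),
      (∑ s : Fin n → α × β, (∏ k : Fin n, q (s k)) * Φ (fun k => (s k).1)
          * Ψ (fun k => (s k).2))
        = ∑ z : (Fin n → α) × (Fin n → β),
            (∏ k : Fin n, q (z.1 k, z.2 k)) * Φ z.1 * Ψ z.2 := by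
    intro Φ Ψ
    rw [← Equiv.sum_comp (Equiv.arrowProdEquivProdArrow (Fin n) (fun _ => α) (fun _ => β)).symm
      (fun s : Fin n → α × β => (∏ k : Fin n, q (s k)) * Φ (fun k => (s k).1)
        * Ψ (fun k => (s k).2))]
    exact Finset.sum_congr rfl fun z _ => rfl
  have transF := trans (fun u : Fin n → α => ∑ x : X1t, K1 u x * f x) (fun _ => (1:ℝ))
  have transG := trans (fun _ => (1:ℝ)) (fun v : Fin n → β => ∑ x : X2t, K2 v x * g x)
  have transQF := trans (fun u : Fin n → α => (∑ x : X1t, K1 u x * f x) ^ 2) (fun _ => (1:ℝ))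
  have transQG := trans (fun _ => (1:ℝ)) (fun v : Fin n → β => (∑ x : X2t, K2 v x * g x) ^ 2)
  have transFG := trans (fun u : Fin n → α => ∑ x : X1t, K1 u x * f x)
    (fun v : Fin n → β => ∑ x : X2t, K2 v x * g x)
  simp only [mul_one, one_mul] at transF transG transQF transQG
  -- pair-form facts
  have pF0 : (∑ z : (Fin n → α) × (Fin n → β), (∏ k : Fin n, q (z.1 k, z.2 k))
      * (∑ x : X1t, K1 z.1 x * f x)) = 0 := by rw [← transF]; exact e0F
  have pG0 : (∑ z : (Fin n → α) × (Fin n → β), (∏ k : Fin n, q (z.1 k, z.2 k))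
      * (∑ x : X2t, K2 z.2 x * g x)) = 0 := by rw [← transG]; exact e0G
  have pQF : (∑ z : (Fin n → α) × (Fin n → β), (∏ k : Fin n, q (z.1 k, z.2 k))
      * (∑ x : X1t, K1 z.1 x * f x) ^ 2) ≤ 1 := by rw [← transQF]; exact hVF
  have pQG : (∑ z : (Fin n → α) × (Fin n → β), (∏ k : Fin n, q (z.1 k, z.2 k))
      * (∑ x : X2t, K2 z.2 x * g x) ^ 2) ≤ 1 := by rw [← transQG]; exact hVG
  have pFG : (∑ z : (Fin n → α) × (Fin n → β), (∏ k : Fin n, q (z.1 k, z.2 k))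
      * (∑ x : X1t, K1 z.1 x * f x) * (∑ x : X2t, K2 z.2 x * g x)) = r := by
    rw [eR]; exact transFG.symm
  -- step 3: apply the tensorized covariance bound
  have hcb := KUaux.tensor q hq hρ0 (KUaux.base q hq) n
    (fun u : Fin n → α => ∑ x : X1t, K1 u x * f x)
    (fun v : Fin n → β => ∑ x : X2t, K2 v x * g x)
  beta_reduce at hcb
  rw [pF0, pG0, pFG] at hcb
  norm_num at hcb
  have n1 : 0 ≤ Real.sqrt (∑ z : (Fin n → α) × (Fin n → β),
      (∏ k : Fin n, q (z.1 k, z.2 k)) * (∑ x : X1t, K1 z.1 x * f x) ^ 2) := Real.sqrt_nonneg _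
  have n2 : 0 ≤ Real.sqrt (∑ z : (Fin n → α) × (Fin n → β),
      (∏ k : Fin n, q (z.1 k, z.2 k)) * (∑ x : X2t, K2 z.2 x * g x) ^ 2) := Real.sqrt_nonneg _
  have s1 : Real.sqrt (∑ z : (Fin n → α) × (Fin n → β),
      (∏ k : Fin n, q (z.1 k, z.2 k)) * (∑ x : X1t, K1 z.1 x * f x) ^ 2) ≤ 1 := by
    rw [show (1:ℝ) = Real.sqrt 1 from Real.sqrt_one.symm]
    exact Real.sqrt_le_sqrt pQF
  have s2 : Real.sqrt (∑ z : (Fin n → α) × (Fin n → β),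
      (∏ k : Fin n, q (z.1 k, z.2 k)) * (∑ x : X2t, K2 z.2 x * g x) ^ 2) ≤ 1 := by
    rw [show (1:ℝ) = Real.sqrt 1 from Real.sqrt_one.symm]
    exact Real.sqrt_le_sqrt pQG
  nlinarith [hcb, mul_le_of_le_one_right hρ0 s1,
    mul_le_mul_of_nonneg_left s2 (mul_nonneg hρ0 n1)]
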